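/- The number of rooted labelled trees on N vertices (where each vertex has a distinct label and any vertex may be the root) is N^(N-1). -/

import Mathlib

/-- `f` is a rooted labelled tree on the vertex set, viewed as a parent map:
there is a unique root (vertex with no parent), and iterating the parent map
from any vertex reaches the root. -/
def IsTransmissionTree {A : Type} (f : A → Option A) : Prop :=
  (∃! r, f r = none) ∧ ∀ a, ∃ k, (fun o => Option.bind o f)^[k] (some a) = none



namespace Joyal

section Stp
variable {β : Type}

/-- one step of the parent map on options -/
def stp (f : β → Option β) : Option β → Option β := fun o => Option.bind o f

@[simp] lemma stp_none (f : β → Option β) : stp f none = none := rfl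
@[simp] lemma stp_some (f : β → Option β) (a : β) : stp f (some a) = f a := rfl

lemma stp_iter_none (f : β → Option β) (k : ℕ) : (stp f)^[k] none = none := by
  induction k with
  | zero => rfl
  | succ k ih => rw [Function.iterate_succ_apply, stp_none, ih]
end Stp

variable {α : Type} [Fintype α] [LinearOrder α]

open scoped Classical in
/-- the set of cyclic points of `g` -/
noncomputable def cyc (g : α → α) : Finset α :=
  Finset.univ.filter (fun x => ∃ k ∈ Finset.Icc 1 (Fintype.card α), g^[k] x = x)

lemma mem_cyc {g : α → α} {x : α} : x ∈ cyc g ↔ ∃ k, 0 < k ∧ g^[k] x = x := by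
  classical
  simp only [cyc, Finset.mem_filter, Finset.mem_univ, true_and, Finset.mem_Icc]
  constructor
  · rintro ⟨k, ⟨hk1, -⟩, hk⟩; exact ⟨k, hk1, hk⟩
  · rintro ⟨k0, hk0, hkk⟩
    have hex : ∃ m, g^[m+1] x = x := ⟨k0 - 1, by simpa [Nat.sub_add_cancel hk0] using hkk⟩
    set m := Nat.find hex with hm
    have hper : g^[m+1] x = x := Nat.find_spec hex
    refine ⟨m + 1, ⟨Nat.le_add_left 1 m, ?_⟩, hper⟩
    have key : ∀ i j : ℕ, i < j → j < m + 1 → g^[i] x ≠ g^[j] x := by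
      intro i j hij hj heq
      have h1 : g^[(m+1-j)+i] x = x := by
        have h2 := congrArg (g^[m+1-j]) heq
        rw [← Function.iterate_add_apply, ← Function.iterate_add_apply,
          Nat.sub_add_cancel (by omega : j ≤ m+1), hper] at h2
        exact h2
      have h3 := Nat.find_min' hex (m := m+1-j+i-1)
        (by rw [show m+1-j+i-1+1 = m+1-j+i from by omega]; exact h1)
      omega
    have hinj : Function.Injective (fun i : Fin (m+1) => g^[(i : ℕ)] x) := by
      rintro ⟨i, hi⟩ ⟨j, hj⟩ hij
      simp only at hij
      rcases lt_trichotomy i j with h | h | h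
      · exact absurd hij (key i j h hj)
      · exact Fin.ext h
      · exact absurd hij.symm (key j i h hi)
    simpa using Fintype.card_le_of_injective _ hinj

lemma cyc_maps {g : α → α} {x : α} (hx : x ∈ cyc g) : g x ∈ cyc g := by
  rw [mem_cyc] at hx ⊢
  obtain ⟨k, hk, hkk⟩ := hx
  exact ⟨k, hk, by rw [← Function.iterate_succ_apply, Function.iterate_succ_apply', hkk]⟩

lemma cyc_surj {g : α → α} {x : α} (hx : x ∈ cyc g) : ∃ y ∈ cyc g, g y = x := by
  rw [mem_cyc] at hx
  obtain ⟨k, hk, hkk⟩ := hx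
  have hk' : k - 1 + 1 = k := Nat.sub_add_cancel hk
  refine ⟨g^[k-1] x, ?_, ?_⟩
  · rw [mem_cyc]
    refine ⟨k, hk, ?_⟩
    rw [← Function.iterate_add_apply, show k + (k-1) = (k-1) + k from by ring,
      Function.iterate_add_apply, hkk]
  · have h2 : g (g^[k-1] x) = g^[k-1+1] x := (Function.iterate_succ_apply' g (k-1) x).symm
    rw [h2, hk', hkk]

lemma cyc_injOn {g : α → α} {x y : α} (hx : x ∈ cyc g) (hy : y ∈ cyc g)
    (hxy : g x = g y) : x = y := by
  rw [mem_cyc] at hx hy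
  obtain ⟨k, hk, hkk⟩ := hx
  obtain ⟨l, hl, hll⟩ := hy
  have hx' : g^[k*l] x = x := by
    rw [Function.iterate_mul]; exact Function.iterate_fixed hkk l
  have hy' : g^[k*l] y = y := by
    rw [mul_comm, Function.iterate_mul]; exact Function.iterate_fixed hll k
  have hpos : 1 ≤ k * l := Nat.one_le_iff_ne_zero.mpr (by positivity)
  have h1 : k*l - 1 + 1 = k*l := Nat.sub_add_cancel hpos
  calc x = g^[k*l] x := hx'.symm
    _ = g^[k*l-1+1] x := by rw [h1]
    _ = g^[k*l-1] (g x) := Function.iterate_succ_apply ..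
    _ = g^[k*l-1] (g y) := by rw [hxy]
    _ = g^[k*l-1+1] y := (Function.iterate_succ_apply ..).symm
    _ = y := by rw [h1, hy']

lemma reach_cyc (g : α → α) (x : α) : ∃ m, g^[m] x ∈ cyc g := by
  have h : ¬ Function.Injective (fun i : Fin (Fintype.card α + 1) => g^[(i : ℕ)] x) := by
    intro h
    have := Fintype.card_le_of_injective _ h
    simp at this
  rw [Function.not_injective_iff] at h
  obtain ⟨i, j, hij, hne⟩ := h
  rcases lt_or_gt_of_ne (fun h => hne (Fin.ext h)) with h | h
  · refine ⟨i, mem_cyc.mpr ⟨(j : ℕ) - i, by omega, ?_⟩⟩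
    rw [← Function.iterate_add_apply, Nat.sub_add_cancel h.le]; exact hij.symm
  · refine ⟨j, mem_cyc.mpr ⟨(i : ℕ) - j, by omega, ?_⟩⟩
    rw [← Function.iterate_add_apply, Nat.sub_add_cancel h.le]; exact hij


/-! ### the spine and the tree of an endofunction -/

/-- the spine: images under `g` of the cyclic points listed in increasing order -/
noncomputable def spine (g : α → α) : List α := (Finset.sort (cyc g) (· ≤ ·)).map g

lemma spine_nodup (g : α → α) : (spine g).Nodup :=
  (Finset.sort_nodup _ _).map_on (fun x hx y hy h =>
    cyc_injOn ((Finset.mem_sort _).mp hx) ((Finset.mem_sort _).mp hy) h)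

lemma mem_spine {g : α → α} {x : α} : x ∈ spine g ↔ x ∈ cyc g := by
  constructor
  · rintro hx
    obtain ⟨y, hy, rfl⟩ := List.mem_map.mp hx
    exact cyc_maps ((Finset.mem_sort _).mp hy)
  · intro hx
    obtain ⟨y, hy, rfl⟩ := cyc_surj hx
    exact List.mem_map.mpr ⟨y, (Finset.mem_sort _).mpr hy, rfl⟩

lemma length_spine (g : α → α) : (spine g).length = (cyc g).card := by
  rw [spine, List.length_map, Finset.length_sort]

lemma length_spine_pos [Nonempty α] (g : α → α) : 0 < (spine g).length := by
  obtain ⟨m, hm⟩ := reach_cyc g (Classical.arbitrary α)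
  rw [length_spine]
  exact Finset.card_pos.mpr ⟨_, hm⟩

lemma indexOf_getElem {l : List α} (hl : l.Nodup) {i : ℕ} (h : i < l.length) :
    l.idxOf l[i] = i := by
  have := List.get_idxOf hl ⟨i, h⟩
  simpa using this

/-- Joyal's tree attached to an endofunction `g` -/
noncomputable def jtree (g : α → α) : α → Option α := fun x =>
  if x ∈ spine g then (spine g)[(spine g).idxOf x + 1]? else some (g x)

lemma jtree_of_not_mem {g : α → α} {x : α} (hx : x ∉ spine g) : jtree g x = some (g x) :=
  if_neg hx

lemma jtree_getElem (g : α → α) {i : ℕ} (h : i < (spine g).length) :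
    jtree g ((spine g)[i]) = (spine g)[i+1]? := by
  rw [jtree]
  simp only [List.getElem_mem h, if_pos, indexOf_getElem (spine_nodup g) h]

lemma jtree_none_iff [Nonempty α] {g : α → α} {x : α} :
    jtree g x = none ↔
      x = (spine g)[(spine g).length - 1]'(by have := length_spine_pos g; omega) := by
  have hlen := length_spine_pos g
  constructor
  · intro hx
    by_cases hmem : x ∈ spine g
    · have hi : (spine g).idxOf x < (spine g).length := List.idxOf_lt_length_iff.mpr hmem
      have hxe : (spine g)[(spine g).idxOf x] = x := List.getElem_idxOf hi
      rw [← hxe, jtree_getElem g hi] at hx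
      have : (spine g).length ≤ (spine g).idxOf x + 1 := by
        by_contra hcon
        rw [List.getElem?_eq_getElem (by omega)] at hx
        exact Option.some_ne_none _ hx
      have heq : (spine g).idxOf x = (spine g).length - 1 := by omega
      have hfin : (⟨(spine g).idxOf x, hi⟩ : Fin (spine g).length) =
          ⟨(spine g).length - 1, by omega⟩ := Fin.ext heq
      rw [← hxe]
      exact congrArg (spine g).get hfin
    · rw [jtree_of_not_mem hmem] at hx
      exact absurd hx (Option.some_ne_none _)
  · rintro rfl
    rw [jtree_getElem g (by omega), List.getElem?_eq_none (by omega)]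


lemma jtree_term_in (g : α → α) :
    ∀ j (x : α), x ∈ spine g → (spine g).length ≤ (spine g).idxOf x + j →
      (stp (jtree g))^[j] (some x) = none := by
  intro j
  induction j with
  | zero =>
    intro x hx hj
    exact absurd (List.idxOf_lt_length_iff.mpr hx) (by omega)
  | succ j ih =>
    intro x hx hj
    have hi : (spine g).idxOf x < (spine g).length := List.idxOf_lt_length_iff.mpr hx
    have hxe : (spine g)[(spine g).idxOf x] = x := List.getElem_idxOf hi
    rw [Function.iterate_succ_apply, stp_some, ← hxe, jtree_getElem g hi]
    by_cases hlt : (spine g).idxOf x + 1 < (spine g).length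
    · rw [List.getElem?_eq_getElem hlt]
      exact ih _ (List.getElem_mem hlt)
        (by rw [indexOf_getElem (spine_nodup g) hlt]; omega)
    · rw [List.getElem?_eq_none (by omega)]
      exact stp_iter_none _ j

lemma jtree_term_out (g : α → α) :
    ∀ m (x : α), (∀ i, i < m → g^[i] x ∉ spine g) →
      (stp (jtree g))^[m] (some x) = some (g^[m] x) := by
  intro m
  induction m with
  | zero => intro x _; rfl
  | succ m ih =>
    intro x hx
    rw [Function.iterate_succ_apply', ih x (fun i hi => hx i (by omega)), stp_some,
      jtree_of_not_mem (hx m (by omega)), Function.iterate_succ_apply']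

lemma jtree_isTree [Nonempty α] (g : α → α) : IsTransmissionTree (jtree g) := by
  have hlen := length_spine_pos g
  constructor
  · exact ⟨(spine g)[(spine g).length - 1]'(by omega), jtree_none_iff.mpr rfl,
      fun y hy => jtree_none_iff.mp hy⟩
  · intro a
    have hreach : ∃ m, g^[m] a ∈ spine g := by
      obtain ⟨m, hm⟩ := reach_cyc g a
      exact ⟨m, mem_spine.mpr hm⟩
    classical
    set m := Nat.find hreach with hm
    refine ⟨(spine g).length + m, ?_⟩
    show (stp (jtree g))^[(spine g).length + m] (some a) = none
    rw [Function.iterate_add_apply,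
      jtree_term_out g m a (fun i hi => Nat.find_min hreach hi)]
    exact jtree_term_in g _ _ (Nat.find_spec hreach) (by omega)


/-! ### the path from a vertex to the root of a tree -/

section Path

variable {f : α → Option α} (hf : ∀ a, ∃ k, (stp f)^[k] (some a) = none) (v : α)

/-- number of steps from `v` until the walk falls off the root -/
noncomputable def depth : ℕ := Nat.find (hf v)

lemma iter_depth : (stp f)^[depth hf v] (some v) = none := Nat.find_spec (hf v)

lemma depth_pos : 0 < depth hf v := by
  by_contra hc
  have h0 := iter_depth hf v
  rw [show depth hf v = 0 from by omega, Function.iterate_zero_apply] at h0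
  exact Option.some_ne_none _ h0

lemma iter_isSome {i : ℕ} (hi : i < depth hf v) : ((stp f)^[i] (some v)).isSome :=
  Option.ne_none_iff_isSome.mp (Nat.find_min (hf v) hi)

lemma iter_ge_none {m : ℕ} (hm : depth hf v ≤ m) : (stp f)^[m] (some v) = none := by
  rw [show m = (m - depth hf v) + depth hf v from by omega, Function.iterate_add_apply,
    iter_depth hf v, stp_iter_none]

/-- the path from `v` to the root -/
noncomputable def pth : List α :=
  (List.range (depth hf v)).pmap (fun i hi => ((stp f)^[i] (some v)).get hi)
    (fun i hi => iter_isSome hf v (List.mem_range.mp hi))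

@[simp] lemma pth_length : (pth hf v).length = depth hf v := by
  rw [pth, List.length_pmap, List.length_range]

lemma depth_le {m : ℕ} (h : (stp f)^[m] (some v) = none) : depth hf v ≤ m :=
  Nat.find_le h

lemma pth_length_pos : 0 < (pth hf v).length := by
  rw [pth_length]; exact depth_pos hf v

lemma pth_spec {i : ℕ} (h : i < (pth hf v).length) :
    (stp f)^[i] (some v) = some ((pth hf v)[i]) := by
  have h' : i < depth hf v := by rwa [pth_length] at h
  have h2 : (pth hf v)[i]'h = ((stp f)^[i] (some v)).get (iter_isSome hf v h') := by
    simp only [pth]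
    rw [List.getElem_pmap (l := List.range (depth hf v))
      (fun i hi => ((stp f)^[i] (some v)).get hi) _
      (by rw [List.length_pmap, List.length_range] at *; exact h')]
    simp
  rw [h2, Option.some_get]

lemma pth_zero : (pth hf v)[0]'(pth_length_pos hf v) = v := by
  have := pth_spec hf v (pth_length_pos hf v)
  simpa using this.symm

lemma pth_nodup : (pth hf v).Nodup := by
  rw [List.nodup_iff_injective_get]
  rintro ⟨i, hi⟩ ⟨j, hj⟩ hij
  simp only [List.get_eq_getElem] at hij
  by_contra hne
  have hne' : i ≠ j := fun h => hne (Fin.ext h)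
  -- wlog i < j
  have key : ∀ i j : ℕ, ∀ (hi : i < (pth hf v).length) (hj : j < (pth hf v).length),
      i < j → (pth hf v)[i] = (pth hf v)[j] → False := by
    intro i j hi hj hlt heq
    have hiter : (stp f)^[i] (some v) = (stp f)^[j] (some v) := by
      rw [pth_spec hf v hi, pth_spec hf v hj, heq]
    have hper : ∀ t : ℕ, (stp f)^[i + t*(j-i)] (some v) = (stp f)^[i] (some v) := by
      intro t
      induction t with
      | zero => simp
      | succ t ih =>
        rw [show i + (t+1)*(j-i) = (j-i) + (i + t*(j-i)) from by ring,
          Function.iterate_add_apply, ih, ← Function.iterate_add_apply,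
          show j - i + i = j from by omega, ← hiter]
    have h1 := hper (depth hf v)
    have h2 : depth hf v ≤ i + (depth hf v) * (j - i) := by
      have : 1 ≤ j - i := by omega
      calc depth hf v ≤ depth hf v * (j - i) := Nat.le_mul_of_pos_right _ (by omega)
        _ ≤ i + depth hf v * (j - i) := by omega
    rw [iter_ge_none hf v h2] at h1
    have h3 := pth_spec hf v hi
    rw [← h1] at h3
    exact Option.some_ne_none _ h3.symm
  rcases Nat.lt_or_ge i j with h | h
  · exact key i j hi hj h hij
  · exact key j i hj hi (by omega) hij.symm

lemma pth_step {i : ℕ} (h : i + 1 < (pth hf v).length) :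
    f ((pth hf v)[i]'(by omega)) = some ((pth hf v)[i+1]) := by
  have h1 := pth_spec hf v (i := i) (by omega)
  have h2 := pth_spec hf v h
  rw [Function.iterate_succ_apply', h1, stp_some] at h2
  exact h2

lemma pth_last :
    f ((pth hf v)[(pth hf v).length - 1]'(by have := pth_length_pos hf v; omega)) = none := by
  have hpos := pth_length_pos hf v
  have h1 := pth_spec hf v (i := (pth hf v).length - 1) (by omega)
  have h2 : (stp f)^[(pth hf v).length] (some v) = none := by
    rw [pth_length]; exact iter_depth hf v
  rw [show (pth hf v).length = ((pth hf v).length - 1) + 1 from by omega,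
    Function.iterate_succ_apply', h1, stp_some] at h2
  exact h2

lemma mem_pth {x : α} : x ∈ pth hf v ↔ ∃ i, (stp f)^[i] (some v) = some x := by
  constructor
  · intro hx
    obtain ⟨i, hi, rfl⟩ := List.mem_iff_getElem.mp hx
    exact ⟨i, pth_spec hf v hi⟩
  · rintro ⟨i, hi⟩
    have hilt : i < (pth hf v).length := by
      rw [pth_length]
      by_contra hcon
      rw [iter_ge_none hf v (by omega)] at hi
      exact Option.some_ne_none _ hi.symm
    have := pth_spec hf v hilt
    rw [this] at hi
    rw [← Option.some_inj.mp hi]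
    exact List.getElem_mem hilt

/-- uniqueness of the path: any list that walks `f` from `v` down to the root is `pth`. -/
lemma pth_eq (Q : List α) (hlen : 0 < Q.length) (hhead : Q[0] = v)
    (hstep : ∀ i (h : i + 1 < Q.length), f (Q[i]'(by omega)) = some (Q[i+1]))
    (hlast : f (Q[Q.length - 1]'(by omega)) = none) :
    pth hf v = Q := by
  have key : ∀ i (h : i < Q.length), (stp f)^[i] (some v) = some (Q[i]) := by
    intro i
    induction i with
    | zero => intro h; rw [Function.iterate_zero_apply, hhead]
    | succ i ih =>
      intro h
      rw [Function.iterate_succ_apply', ih (by omega), stp_some, hstep i h]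
  have hQd : (stp f)^[Q.length] (some v) = none := by
    rw [show Q.length = (Q.length - 1) + 1 from by omega,
      Function.iterate_succ_apply', key _ (by omega), stp_some, hlast]
  have hdep : depth hf v = Q.length := by
    refine le_antisymm (Nat.find_le hQd) ?_
    by_contra hcon
    have h1 := iter_depth hf v
    rw [key _ (by omega)] at h1
    exact Option.some_ne_none _ h1
  refine List.ext_get (by rw [pth_length, hdep]) ?_
  intro n h1 h2
  simp only [List.get_eq_getElem]
  have ha := pth_spec hf v h1
  have hb := key n h2
  rw [ha] at hb
  exact Option.some_inj.mp hb

end Path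


/-- every point of a finite set mapped bijectively to itself is periodic -/
lemma periodic_of_maps (s : Finset α) (g : α → α) (hmaps : ∀ x ∈ s, g x ∈ s)
    (hinj : ∀ x ∈ s, ∀ y ∈ s, g x = g y → x = y) {x : α} (hx : x ∈ s) :
    ∃ k, 0 < k ∧ g^[k] x = x := by
  have hiter : ∀ n, g^[n] x ∈ s := by
    intro n
    induction n with
    | zero => exact hx
    | succ n ih => rw [Function.iterate_succ_apply']; exact hmaps _ ih
  have hcancel : ∀ i j, i ≤ j → g^[i] x = g^[j] x → g^[j-i] x = x := by
    intro i
    induction i with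
    | zero => intro j _ h; rw [Nat.sub_zero, ← h, Function.iterate_zero_apply]
    | succ i ih =>
      intro j hij h
      have hj1 : j = (j - 1) + 1 := by omega
      rw [Function.iterate_succ_apply', hj1, Function.iterate_succ_apply'] at h
      have h2 := hinj _ (hiter i) _ (hiter (j-1)) h
      have h3 := ih (j-1) (by omega) h2
      rw [show j - 1 - i = j - (i+1) from by omega] at h3
      exact h3
  have hni : ¬ Function.Injective (fun i : Fin (Fintype.card α + 1) => g^[(i : ℕ)] x) := by
    intro h
    have := Fintype.card_le_of_injective _ h
    simp at this
  rw [Function.not_injective_iff] at hni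
  obtain ⟨i, j, hij, hne⟩ := hni
  rcases lt_or_gt_of_ne (fun h => hne (Fin.ext h)) with h | h
  · exact ⟨(j : ℕ) - i, by omega, hcancel i j h.le hij⟩
  · exact ⟨(i : ℕ) - j, by omega, hcancel j i h.le hij.symm⟩

/-! ### the inverse construction -/

section Inv

variable {f : α → Option α}

lemma _root_.IsTransmissionTree.term (hf : IsTransmissionTree f) :
    ∀ a, ∃ k, (stp f)^[k] (some a) = none := hf.2

variable (hf : IsTransmissionTree f) (v : α)

/-- the sorted list of the vertices on the path from `v` to the root -/
noncomputable def rts : List α := Finset.sort (pth hf.term v).toFinset (· ≤ ·)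

lemma length_rts : (rts hf v).length = (pth hf.term v).length := by
  rw [rts, Finset.length_sort, List.toFinset_card_of_nodup (pth_nodup _ _)]

lemma mem_rts {x : α} : x ∈ rts hf v ↔ x ∈ pth hf.term v := by
  rw [rts, Finset.mem_sort, List.mem_toFinset]

lemma rts_nodup : (rts hf v).Nodup := Finset.sort_nodup _ _

lemma indexOf_rts_lt {x : α} (hx : x ∈ pth hf.term v) :
    (rts hf v).idxOf x < (pth hf.term v).length := by
  rw [← length_rts]
  exact List.idxOf_lt_length_iff.mpr ((mem_rts hf v).mpr hx)

lemma fx_isSome {x : α} (hx : x ∉ pth hf.term v) : (f x).isSome := by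
  rw [Option.isSome_iff_ne_none]
  intro hnone
  obtain ⟨r, -, hr⟩ := hf.1
  have h1 : x = r := hr x hnone
  have h2 := hr _ (pth_last hf.term v)
  rw [h1, ← h2] at hx
  exact hx (List.getElem_mem _)

/-- Joyal's endofunction attached to a rooted tree with a marked vertex -/
noncomputable def jinv : α → α := fun x =>
  if h : x ∈ pth hf.term v then
    (pth hf.term v)[(rts hf v).idxOf x]'(indexOf_rts_lt hf v h)
  else (f x).get (fx_isSome hf v h)

lemma jinv_of_mem {x : α} (hx : x ∈ pth hf.term v) :
    jinv hf v x = (pth hf.term v)[(rts hf v).idxOf x]'(indexOf_rts_lt hf v hx) :=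
  dif_pos hx

lemma jinv_of_not_mem {x : α} (hx : x ∉ pth hf.term v) :
    some (jinv hf v x) = f x := by
  rw [jinv, dif_neg hx, Option.some_get]

lemma jinv_rts {j : ℕ} (hj : j < (rts hf v).length) :
    jinv hf v ((rts hf v)[j]) = (pth hf.term v)[j]'(by rwa [← length_rts]) := by
  have hmem : (rts hf v)[j] ∈ pth hf.term v :=
    (mem_rts hf v).mp (List.getElem_mem hj)
  rw [jinv_of_mem hf v hmem]
  congr 1
  exact indexOf_getElem (rts_nodup hf v) hj

lemma jinv_maps {x : α} (hx : x ∈ pth hf.term v) : jinv hf v x ∈ pth hf.term v := by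
  rw [jinv_of_mem hf v hx]
  exact List.getElem_mem _

lemma jinv_injOn {x y : α} (hx : x ∈ pth hf.term v) (hy : y ∈ pth hf.term v)
    (hxy : jinv hf v x = jinv hf v y) : x = y := by
  rw [jinv_of_mem hf v hx, jinv_of_mem hf v hy] at hxy
  have hix := List.idxOf_lt_length_iff.mpr ((mem_rts hf v).mpr hx)
  have hiy := List.idxOf_lt_length_iff.mpr ((mem_rts hf v).mpr hy)
  have h2 : (rts hf v).idxOf x = (rts hf v).idxOf y := by
    have hninj := List.nodup_iff_injective_get.mp (pth_nodup hf.term v)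
    have h3 := hninj (a₁ := ⟨(rts hf v).idxOf x, indexOf_rts_lt hf v hx⟩)
      (a₂ := ⟨(rts hf v).idxOf y, indexOf_rts_lt hf v hy⟩)
      (by simp only [List.get_eq_getElem]; exact hxy)
    exact congrArg Fin.val h3
  calc x = (rts hf v)[(rts hf v).idxOf x] := (List.getElem_idxOf hix).symm
    _ = (rts hf v)[(rts hf v).idxOf y]'hiy := by congr 1
    _ = y := List.getElem_idxOf hiy

lemma jinv_reach (x : α) : ∃ t, (jinv hf v)^[t] x ∈ pth hf.term v := by
  suffices h : ∀ n, ∀ x : α, depth hf.term x ≤ n → ∃ t, (jinv hf v)^[t] x ∈ pth hf.term v by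
    exact h (depth hf.term x) x le_rfl
  intro n
  induction n with
  | zero => intro x hx; exact absurd (depth_pos hf.term x) (by omega)
  | succ n ih =>
    intro x hx
    by_cases hmem : x ∈ pth hf.term v
    · exact ⟨0, hmem⟩
    · have hsome := fx_isSome hf v hmem
      set y := (f x).get hsome with hy
      have hfy : f x = some y := (Option.some_get hsome).symm
      have hstep : ∀ k, (stp f)^[k+1] (some x) = (stp f)^[k] (some y) := by
        intro k
        rw [Function.iterate_succ_apply, stp_some, hfy]
      have hdy : depth hf.term y ≤ n := by
        have h1 : (stp f)^[depth hf.term x - 1] (some y) = none := by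
          rw [← hstep, show depth hf.term x - 1 + 1 = depth hf.term x from by
            have := depth_pos hf.term x; omega]
          exact iter_depth hf.term x
        have h2 := depth_le hf.term y h1
        have := depth_pos hf.term x
        omega
      obtain ⟨t, ht⟩ := ih y hdy
      refine ⟨t + 1, ?_⟩
      rw [Function.iterate_succ_apply]
      have : jinv hf v x = y := Option.some_inj.mp (by rw [jinv_of_not_mem hf v hmem, hfy])
      rwa [this]

lemma cyc_jinv : cyc (jinv hf v) = (pth hf.term v).toFinset := by
  ext x
  rw [List.mem_toFinset]
  constructor
  · rw [mem_cyc]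
    rintro ⟨k, hk, hkk⟩
    by_contra hmem
    obtain ⟨t, ht⟩ := jinv_reach hf v x
    have hstay : ∀ m, (jinv hf v)^[t + m] x ∈ pth hf.term v := by
      intro m
      induction m with
      | zero => exact ht
      | succ m ih =>
        rw [show t + (m+1) = (t+m) + 1 from by ring, Function.iterate_succ_apply']
        exact jinv_maps hf v ih
    have hfix : (jinv hf v)^[k * (t+1)] x = x := by
      rw [Function.iterate_mul]
      exact Function.iterate_fixed hkk (t+1)
    have hge : t ≤ k * (t+1) := le_trans (by omega) (Nat.le_mul_of_pos_left _ hk)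
    have := hstay (k * (t+1) - t)
    rw [show t + (k * (t+1) - t) = k * (t+1) from by omega, hfix] at this
    exact hmem this
  · intro hx
    rw [mem_cyc]
    exact periodic_of_maps ((pth hf.term v).toFinset) _
      (fun y hy => List.mem_toFinset.mpr (jinv_maps hf v (List.mem_toFinset.mp hy)))
      (fun a ha b hb => jinv_injOn hf v (List.mem_toFinset.mp ha) (List.mem_toFinset.mp hb))
      (List.mem_toFinset.mpr hx)

end Inv


/-! ### the two roundtrips -/

lemma spine_toFinset (g : α → α) : (spine g).toFinset = cyc g := by
  ext x
  rw [List.mem_toFinset, mem_spine]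

/-- the marked vertex attached to an endofunction -/
noncomputable def jvert [Nonempty α] (g : α → α) : α := (spine g)[0]'(length_spine_pos g)

lemma pth_jtree [Nonempty α] (g : α → α) :
    pth (jtree_isTree g).term (jvert g) = spine g := by
  refine pth_eq _ _ (spine g) (length_spine_pos g) rfl ?_ ?_
  · intro i h
    rw [jtree_getElem g (by omega), List.getElem?_eq_getElem h]
  · rw [jtree_getElem g (by have := length_spine_pos g; omega),
      List.getElem?_eq_none (by have := length_spine_pos g; omega)]

/-- first roundtrip : the endofunction is recovered from its tree and vertex -/
theorem jinv_jtree [Nonempty α] (g : α → α) :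
    jinv (jtree_isTree g) (jvert g) = g := by
  have hP := pth_jtree g
  have hrts : rts (jtree_isTree g) (jvert g) = Finset.sort (cyc g) (· ≤ ·) := by
    rw [rts, hP, spine_toFinset]
  funext x
  by_cases hx : x ∈ spine g
  · have hx' : x ∈ pth (jtree_isTree g).term (jvert g) := by rw [hP]; exact hx
    rw [jinv_of_mem _ _ hx']
    set L := Finset.sort (cyc g) (· ≤ ·) with hL
    have hxL : x ∈ L := (Finset.mem_sort _).mpr (mem_spine.mp hx)
    have hiL : L.idxOf x < L.length := List.idxOf_lt_length_iff.mpr hxL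
    have hlen : (spine g).length = L.length := by rw [spine, List.length_map]
    have hidx : (rts (jtree_isTree g) (jvert g)).idxOf x = L.idxOf x := by rw [hrts]
    have h1 : (pth (jtree_isTree g).term (jvert g))[(rts (jtree_isTree g)
        (jvert g)).idxOf x]'(indexOf_rts_lt _ _ hx') =
        (spine g)[(rts (jtree_isTree g) (jvert g)).idxOf x]'(by
          rw [hidx, hlen]; exact hiL) := List.getElem_of_eq hP _
    rw [h1]
    have h2 : (spine g)[(rts (jtree_isTree g) (jvert g)).idxOf x]'(by
        rw [hidx, hlen]; exact hiL) = (spine g)[L.idxOf x]'(by rw [hlen]; exact hiL) :=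
      congrArg (spine g).get (Fin.ext hidx)
    rw [h2]
    show (L.map g)[L.idxOf x]'(by rwa [List.length_map]) = g x
    rw [List.getElem_map, List.getElem_idxOf hiL]
  · have hx' : x ∉ pth (jtree_isTree g).term (jvert g) := by rw [hP]; exact hx
    have h1 := jinv_of_not_mem (jtree_isTree g) _ hx'
    rw [jtree_of_not_mem hx] at h1
    exact Option.some_inj.mp h1

section RoundB

variable {f : α → Option α} (hf : IsTransmissionTree f) (v : α)

lemma spine_jinv : spine (jinv hf v) = pth hf.term v := by
  have h1 : spine (jinv hf v) = (rts hf v).map (jinv hf v) := by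
    unfold spine rts
    rw [cyc_jinv]
  rw [h1]
  refine List.ext_get (by rw [List.length_map, length_rts]) ?_
  intro n h1 h2
  simp only [List.get_eq_getElem, List.getElem_map]
  exact jinv_rts hf v (by rwa [List.length_map] at h1)

/-- second roundtrip, tree part -/
theorem jtree_jinv : jtree (jinv hf v) = f := by
  funext x
  by_cases hx : x ∈ pth hf.term v
  · have hx' : x ∈ spine (jinv hf v) := by rw [spine_jinv]; exact hx
    rw [jtree, if_pos hx', spine_jinv]
    set P := pth hf.term v with hPdef
    have hi : P.idxOf x < P.length := List.idxOf_lt_length_iff.mpr hx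
    have hxe : P[P.idxOf x] = x := List.getElem_idxOf hi
    by_cases hlt : P.idxOf x + 1 < P.length
    · rw [List.getElem?_eq_getElem hlt]
      conv_rhs => rw [← hxe]
      exact (pth_step hf.term v hlt).symm
    · rw [List.getElem?_eq_none (by omega)]
      have hidx2 : P.idxOf x = P.length - 1 := by omega
      have h2 : P[P.idxOf x]'hi = P[P.length - 1]'(by omega) :=
        congrArg P.get (Fin.ext (by simpa using hidx2))
      conv_rhs => rw [← hxe, h2]
      exact (pth_last hf.term v).symm
  · have hx' : x ∉ spine (jinv hf v) := by rw [spine_jinv]; exact hx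
    rw [jtree_of_not_mem hx']
    exact jinv_of_not_mem hf v hx

/-- second roundtrip, vertex part -/
theorem jvert_jinv [Nonempty α] : jvert (jinv hf v) = v := by
  rw [jvert]
  rw [List.getElem_of_eq (spine_jinv hf v) _]
  exact pth_zero hf.term v

end RoundB

/-- Joyal's bijection -/
noncomputable def joyalEquiv [Nonempty α] :
    (α → α) ≃ ({f : α → Option α // IsTransmissionTree f} × α) where
  toFun g := (⟨jtree g, jtree_isTree g⟩, jvert g)
  invFun p := jinv p.1.2 p.2
  left_inv g := jinv_jtree g
  right_inv p := by
    obtain ⟨⟨f, hf⟩, v⟩ := p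
    exact Prod.ext (Subtype.ext (jtree_jinv hf v)) (jvert_jinv hf v)

end Joyal

/-- The number of rooted labelled trees on `N` vertices is `N^(N-1)`. -/
theorem cayley_rooted (N : ℕ) (hN : 1 ≤ N) :
    Nat.card {f : Fin N → Option (Fin N) // IsTransmissionTree f} = N ^ (N - 1) := by
  haveI : Nonempty (Fin N) := ⟨⟨0, by omega⟩⟩
  have h1 := Nat.card_congr (Joyal.joyalEquiv (α := Fin N))
  rw [Nat.card_prod] at h1
  have h2 : Nat.card (Fin N → Fin N) = N ^ N := by
    rw [Nat.card_eq_fintype_card, Fintype.card_fun, Fintype.card_fin]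
  have h3 : Nat.card (Fin N) = N := by simp
  rw [h2, h3] at h1
  have h4 : N ^ N = N ^ (N - 1) * N := by
    rw [← pow_succ, show N - 1 + 1 = N from by omega]
  rw [h4] at h1
  exact Nat.eq_of_mul_eq_mul_right (by omega) h1.symm
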